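/- Let φ be a meromorphic function on ℂ satisfying φ(z+1) = (-1)^{2m}φ(z) and φ(z+τ) = (-1)^ε e^{-2πim(τ+2z)}φ(z) for some m ∈ (1/2)ℤ, ε ∈ {0,1}, τ ∈ ℍ, and let ℓ ∈ m + ℤ. If φ has no poles on the boundary of P_{z₀} := z₀ + [0,1)τ + [0,1), then ∫_{∂P_{z₀}} φ(v) θ⁺_{ℓ,ε,-m}(v;τ) dv = e^{-πiℓ²τ/(2m)} ∫_{z₀}^{z₀+1} φ(v) e^{-2πiℓv} dv, where the boundary contour is traversed counterclockwise. -/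

import Mathlib

noncomputable section
open Complex Filter Set intervalIntegral

/-- `e x = exp(2πix)` -/
def e (x : ℂ) : ℂ := Complex.exp (2 * Real.pi * Complex.I * x)

/-- Partial theta function `θ⁺_{ℓ,ε,M}(z;τ)`. -/
def ptheta (ℓ M : ℝ) (ε : ℕ) (z τ : ℂ) : ℂ :=
  ∑' n : ℕ, (-1 : ℂ) ^ (n * ε) * e (τ * ((2 * M * n - ℓ) ^ 2 / (4 * M)))
      * e (z * (2 * M * n - ℓ))

/-- the `n`-th term of the partial theta series -/
def pterm (ℓ M : ℝ) (ε : ℕ) (z τ : ℂ) (n : ℕ) : ℂ :=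
  (-1 : ℂ) ^ (n * ε) * e (τ * ((2 * M * n - ℓ) ^ 2 / (4 * M)))
      * e (z * (2 * M * n - ℓ))

lemma ptheta_eq (ℓ M : ℝ) (ε : ℕ) (z τ : ℂ) : ptheta ℓ M ε z τ = ∑' n, pterm ℓ M ε z τ n := rfl

lemma e_add (x y : ℂ) : e (x + y) = e x * e y := by
  rw [e, e, e, mul_add, Complex.exp_add]

lemma e_intCast (n : ℤ) : e n = 1 := by
  rw [e, show 2 * (Real.pi : ℂ) * Complex.I * n = n * (2 * Real.pi * Complex.I) by ring,
    Complex.exp_int_mul_two_pi_mul_I]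

lemma norm_e (w : ℂ) : ‖e w‖ = Real.exp (-(2 * Real.pi * w.im)) := by
  rw [e, Complex.norm_exp]
  congr 1
  simp [Complex.mul_re, Complex.mul_im]

lemma pterm_eq_jacobi (ℓ M : ℝ) (hM : 0 < M) (ε : ℕ) (z τ : ℂ) (n : ℕ) :
    pterm ℓ M ε z τ n
      = e (τ * (ℓ ^ 2 / (4 * M)) - z * ℓ)
          * jacobiTheta₂_term (n : ℤ) ((ε : ℂ) / 2 + 2 * M * z - ℓ * τ) (2 * M * τ) := by
  have hM0 : (M : ℂ) ≠ 0 := Complex.ofReal_ne_zero.mpr hM.ne'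
  rw [pterm, jacobiTheta₂_term, e, e, e,
    show (-1 : ℂ) = Complex.exp (Real.pi * Complex.I) from Complex.exp_pi_mul_I.symm,
    ← Complex.exp_nat_mul, ← Complex.exp_add, ← Complex.exp_add, ← Complex.exp_add]
  congr 1
  push_cast
  field_simp
  ring

lemma summable_pterm (ℓ M : ℝ) (hM : 0 < M) (ε : ℕ) (z τ : ℂ) (hτ : 0 < τ.im) :
    Summable (pterm ℓ M ε z τ) := by
  have h : Summable (jacobiTheta₂_term · ((ε : ℂ) / 2 + 2 * M * z - ℓ * τ) (2 * M * τ)) :=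
    (summable_jacobiTheta₂_term_iff _ _).mpr (by
      simpa [Complex.mul_im] using by positivity)
  have h2 := (h.mul_left (e (τ * (ℓ ^ 2 / (4 * M)) - z * ℓ))).comp_injective
    Int.ofNat_injective
  exact h2.congr fun n => (pterm_eq_jacobi ℓ M hM ε z τ n).symm

lemma norm_pterm_shift (ℓ M : ℝ) (ε : ℕ) (z τ : ℂ) (t : ℝ) (n : ℕ) :
    ‖pterm ℓ M ε (z + t) τ n‖ = ‖pterm ℓ M ε z τ n‖ := by
  have hc : ∀ w : ℂ, w * (2 * M * n - ℓ) = w * ((2 * M * n - ℓ : ℝ) : ℂ) := by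
    intro w; push_cast; ring
  rw [pterm, pterm, hc (z + t), hc z]
  simp only [norm_mul, norm_pow, norm_neg, norm_one, one_pow, norm_e]
  congr 3
  simp [Complex.add_im, Complex.mul_im]

lemma continuous_ptheta_line (ℓ M : ℝ) (hM : 0 < M) (ε : ℕ) (z τ : ℂ) (hτ : 0 < τ.im) :
    Continuous fun t : ℝ => ptheta ℓ M ε (z + t) τ := by
  simp only [ptheta_eq]
  apply continuous_tsum (u := fun n => ‖pterm ℓ M ε z τ n‖)
  · intro n
    unfold pterm e
    fun_prop
  · exact summable_norm_iff.mpr (summable_pterm ℓ M hM ε z τ hτ)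
  · exact fun n t => le_of_eq (norm_pterm_shift ℓ M ε z τ t n)

lemma theta_step (ℓ M : ℝ) (hM : 0 < M) (ε : ℕ) (z τ : ℂ) (hτ : 0 < τ.im) :
    ptheta ℓ M ε z τ
      - (-1 : ℂ) ^ ε * e (M * (τ + 2 * z)) * ptheta ℓ M ε (z + τ) τ
      = e (τ * (ℓ ^ 2 / (4 * M))) * e (-(ℓ * z)) := by
  have hM0 : (M : ℂ) ≠ 0 := Complex.ofReal_ne_zero.mpr hM.ne'
  have hs := summable_pterm ℓ M hM ε z τ hτ
  have key : ∀ n : ℕ, pterm ℓ M ε z τ (n + 1)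
      = ((-1 : ℂ) ^ ε * e (M * (τ + 2 * z))) * pterm ℓ M ε (z + τ) τ n := by
    intro n
    rw [pterm, pterm, show (n + 1) * ε = n * ε + ε by ring, pow_add]
    have hexp : e (τ * ((2 * M * (n + 1 : ℕ) - ℓ) ^ 2 / (4 * M)) + z * (2 * M * (n + 1 : ℕ) - ℓ))
        = e (M * (τ + 2 * z) + (τ * ((2 * M * n - ℓ) ^ 2 / (4 * M)) + (z + τ) * (2 * M * n - ℓ))) := by
      congr 1
      push_cast
      field_simp
      ring
    rw [e_add, e_add, e_add] at hexp
    calc (-1 : ℂ) ^ (n * ε) * (-1 : ℂ) ^ ε * e (τ * ((2 * M * (n + 1 : ℕ) - ℓ) ^ 2 / (4 * M)))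
          * e (z * (2 * M * (n + 1 : ℕ) - ℓ))
        = (-1 : ℂ) ^ (n * ε) * (-1 : ℂ) ^ ε
            * (e (τ * ((2 * M * (n + 1 : ℕ) - ℓ) ^ 2 / (4 * M)))
              * e (z * (2 * M * (n + 1 : ℕ) - ℓ))) := by ring
      _ = (-1 : ℂ) ^ (n * ε) * (-1 : ℂ) ^ ε
            * (e (M * (τ + 2 * z)) * (e (τ * ((2 * M * n - ℓ) ^ 2 / (4 * M)))
              * e ((z + τ) * (2 * M * n - ℓ)))) := by rw [hexp]
      _ = _ := by ring
  have h0 : ptheta ℓ M ε z τ = pterm ℓ M ε z τ 0 + ∑' n, pterm ℓ M ε z τ (n + 1) := by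
    rw [ptheta_eq]; exact Summable.tsum_eq_zero_add hs
  rw [h0, tsum_congr key, tsum_mul_left, ← ptheta_eq]
  have h00 : pterm ℓ M ε z τ 0 = e (τ * (ℓ ^ 2 / (4 * M))) * e (-(ℓ * z)) := by
    rw [pterm, zero_mul, pow_zero, one_mul]
    congr 1
    · congr 1; push_cast; ring
    · congr 1; push_cast; ring
  rw [h00]; ring

/-- Boundary of the parallelogram with vertices `z₀, z₀+1, z₀+τ, z₀+1+τ`. -/
def parBoundary (z₀ τ : ℂ) : Set ℂ :=
  {z | ∃ t : ℝ, 0 ≤ t ∧ t ≤ 1 ∧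
    (z = z₀ + t ∨ z = z₀ + τ + t ∨ z = z₀ + t * τ ∨ z = z₀ + 1 + t * τ)}

/-- The counterclockwise contour integral of `g` over `∂P_{z₀}`. -/
def parContourIntegral (g : ℂ → ℂ) (z₀ τ : ℂ) : ℂ :=
  (∫ t in (0 : ℝ)..1, g (z₀ + t)) + (∫ t in (0 : ℝ)..1, g (z₀ + 1 + t * τ) * τ)
    - (∫ t in (0 : ℝ)..1, g (z₀ + τ + t)) - (∫ t in (0 : ℝ)..1, g (z₀ + t * τ) * τ)

theorem contour_integral_eq_fourier_coefficient
    (τ : ℂ) (hτ : 0 < τ.im)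
    (m : ℝ) (hm : ∃ k : ℕ, 0 < k ∧ m = -((k : ℝ) / 2))
    (ε : ℕ) (hε : ε = 0 ∨ ε = 1)
    (φ : ℂ → ℂ) (hmero : MeromorphicOn φ Set.univ)
    (hper1 : ∀ z : ℂ, φ (z + 1) = Complex.exp (Real.pi * Complex.I * (2 * m)) * φ z)
    (hperτ : ∀ z : ℂ, φ (z + τ)
      = (-1 : ℂ) ^ ε * Complex.exp (-2 * Real.pi * Complex.I * m * (τ + 2 * z)) * φ z)
    (ℓ : ℝ) (hℓ : ∃ k : ℤ, ℓ = m + (k : ℝ))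
    (z₀ : ℂ)
    -- `φ` has no poles on `∂P_{z₀}`
    (hbd : ∀ z ∈ parBoundary z₀ τ, DifferentiableAt ℂ φ z) :
    parContourIntegral (fun v => φ v * ptheta ℓ (-m) ε v τ) z₀ τ
      = Complex.exp (-Real.pi * Complex.I * ℓ ^ 2 * τ / (2 * m))
          * ∫ t in (0 : ℝ)..1, φ (z₀ + t) * e (-(ℓ * (z₀ + t))) := by
  obtain ⟨k, hk, hmk⟩ := hm
  obtain ⟨j, hj⟩ := hℓ
  have hk' : (0 : ℝ) < k := by exact_mod_cast hk
  have hM : (0 : ℝ) < -m := by rw [hmk, neg_neg]; linarith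
  have hm0 : m ≠ 0 := by intro h; rw [h] at hM; norm_num at hM
  set M : ℝ := -m with hMdef
  -- 1-periodicity of φ · θ
  have hθ1 : ∀ v : ℂ, ptheta ℓ M ε (v + 1) τ = e (-(ℓ : ℂ)) * ptheta ℓ M ε v τ := by
    intro v
    rw [ptheta_eq, ptheta_eq, ← tsum_mul_left]
    apply tsum_congr
    intro n
    rw [pterm, pterm]
    have h1 : e ((v + 1) * (2 * (M : ℂ) * n - ℓ))
        = e (-(ℓ : ℂ)) * e (v * (2 * M * n - ℓ)) := by
      have h2 : ((v + 1) * (2 * (M : ℂ) * n - ℓ))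
          = (((k : ℤ) * n : ℤ) : ℂ) + (-(ℓ : ℂ) + v * (2 * M * n - ℓ)) := by
        push_cast [hMdef, hmk, hj]
        ring
      rw [h2, e_add, e_intCast, one_mul, e_add]
    rw [h1]; ring
  have hg1 : ∀ v : ℂ, φ (v + 1) * ptheta ℓ M ε (v + 1) τ = φ v * ptheta ℓ M ε v τ := by
    intro v
    rw [hper1, hθ1]
    have h1 : Complex.exp (Real.pi * Complex.I * (2 * m)) * e (-(ℓ : ℂ)) = 1 := by
      rw [e, ← Complex.exp_add,
        show (Real.pi : ℂ) * Complex.I * (2 * m) + 2 * Real.pi * Complex.I * (-(ℓ : ℂ))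
          = ((-j : ℤ) : ℂ) * (2 * Real.pi * Complex.I) by push_cast [hj]; ring,
        Complex.exp_int_mul_two_pi_mul_I]
    calc Complex.exp (Real.pi * Complex.I * (2 * m)) * φ v * (e (-(ℓ : ℂ)) * ptheta ℓ M ε v τ)
        = (Complex.exp (Real.pi * Complex.I * (2 * m)) * e (-(ℓ : ℂ)))
            * (φ v * ptheta ℓ M ε v τ) := by ring
      _ = φ v * ptheta ℓ M ε v τ := by rw [h1, one_mul]
  -- the τ-step
  have hgτ : ∀ v : ℂ, φ v * ptheta ℓ M ε v τ - φ (v + τ) * ptheta ℓ M ε (v + τ) τ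
      = e (τ * (ℓ ^ 2 / (4 * M))) * (φ v * e (-(ℓ * v))) := by
    intro v
    rw [hperτ]
    have h1 : Complex.exp (-2 * Real.pi * Complex.I * m * (τ + 2 * v))
        = e (M * (τ + 2 * v)) := by
      rw [e]; congr 1; push_cast [hMdef]; ring
    have h2 := theta_step ℓ M hM ε v τ hτ
    calc φ v * ptheta ℓ M ε v τ
        - (-1 : ℂ) ^ ε * Complex.exp (-2 * Real.pi * Complex.I * m * (τ + 2 * v)) * φ v
          * ptheta ℓ M ε (v + τ) τ
        = φ v * (ptheta ℓ M ε v τ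
            - (-1 : ℂ) ^ ε * e (M * (τ + 2 * v)) * ptheta ℓ M ε (v + τ) τ) := by
          rw [h1]; ring
      _ = φ v * (e (τ * (ℓ ^ 2 / (4 * M))) * e (-(ℓ * v))) := by rw [h2]
      _ = _ := by ring
  -- continuity / integrability on the bottom edge
  have hφc : ∀ t : ℝ, t ∈ Set.uIcc (0 : ℝ) 1 → ContinuousAt (fun s : ℝ => φ (z₀ + s)) t := by
    intro t ht
    rw [Set.uIcc_of_le zero_le_one] at ht
    have hmem : z₀ + (t : ℂ) ∈ parBoundary z₀ τ := ⟨t, ht.1, ht.2, Or.inl rfl⟩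
    have hin : ContinuousAt (fun s : ℝ => z₀ + (s : ℂ)) t := by fun_prop
    have hcomp : ContinuousAt (φ ∘ fun s : ℝ => z₀ + (s : ℂ)) t :=
      ContinuousAt.comp (x := t) (f := fun s : ℝ => z₀ + (s : ℂ))
        ((hbd _ hmem).continuousAt) hin
    exact hcomp
  have hi1 : IntervalIntegrable (fun t : ℝ => φ (z₀ + t) * ptheta ℓ M ε (z₀ + t) τ)
      MeasureTheory.volume 0 1 := by
    apply ContinuousOn.intervalIntegrable
    intro t ht
    exact (((hφc t ht).mul
      ((continuous_ptheta_line ℓ M hM ε z₀ τ hτ).continuousAt)).continuousWithinAt)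
  have hi2 : IntervalIntegrable
      (fun t : ℝ => e (τ * (ℓ ^ 2 / (4 * M))) * (φ (z₀ + t) * e (-(ℓ * (z₀ + t)))))
      MeasureTheory.volume 0 1 := by
    apply ContinuousOn.intervalIntegrable
    intro t ht
    exact (continuousAt_const.mul ((hφc t ht).mul (by unfold e; fun_prop))).continuousWithinAt
  -- identify the two τ-direction edges
  have h24 : (∫ t in (0:ℝ)..1, φ (z₀ + 1 + t * τ) * ptheta ℓ M ε (z₀ + 1 + t * τ) τ * τ)
      = ∫ t in (0:ℝ)..1, φ (z₀ + t * τ) * ptheta ℓ M ε (z₀ + t * τ) τ * τ := by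
    apply intervalIntegral.integral_congr
    intro t ht
    simp only
    rw [show z₀ + 1 + (t : ℂ) * τ = z₀ + (t : ℂ) * τ + 1 by ring, hg1]
  -- top edge versus bottom edge
  have h3 : (∫ t in (0:ℝ)..1, φ (z₀ + τ + t) * ptheta ℓ M ε (z₀ + τ + t) τ)
      = (∫ t in (0:ℝ)..1, φ (z₀ + t) * ptheta ℓ M ε (z₀ + t) τ)
        - e (τ * (ℓ ^ 2 / (4 * M))) * ∫ t in (0:ℝ)..1, φ (z₀ + t) * e (-(ℓ * (z₀ + t))) := by
    have heq : Set.EqOn (fun t : ℝ => φ (z₀ + τ + t) * ptheta ℓ M ε (z₀ + τ + t) τ)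
        (fun t : ℝ => φ (z₀ + t) * ptheta ℓ M ε (z₀ + t) τ
          - e (τ * (ℓ ^ 2 / (4 * M))) * (φ (z₀ + t) * e (-(ℓ * (z₀ + t)))))
        (Set.uIcc (0:ℝ) 1) := by
      intro t _
      simp only
      have hv := hgτ (z₀ + (t : ℂ))
      rw [show z₀ + τ + (t : ℂ) = z₀ + (t : ℂ) + τ by ring]
      linear_combination -hv
    rw [intervalIntegral.integral_congr heq, intervalIntegral.integral_sub hi1 hi2,
      intervalIntegral.integral_const_mul]
  -- assemble
  simp only [parContourIntegral]
  rw [h24, h3]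
  have hC : e (τ * (ℓ ^ 2 / (4 * M)))
      = Complex.exp (-Real.pi * Complex.I * ℓ ^ 2 * τ / (2 * m)) := by
    rw [e]
    congr 1
    have hm0' : (m : ℂ) ≠ 0 := Complex.ofReal_ne_zero.mpr hm0
    push_cast [hMdef]
    field_simp
    ring
  rw [← hC]
  ring
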